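/- arXiv:2211.04676 — 2 statements merged into one kernel-verified Lean document; each statement's English description precedes it below -/
import Mathlib

section
/- Under the same setting, for each i = 1,…,k: sin∠_i(U_k, Û_l) ≤ σ₁((I_m − Û_l Û_l*) A) / σ_i. -/
open Matrix

noncomputable def eigval {n : Type} [Fintype n] [DecidableEq n] {M : Matrix n n ℂ}
    (hM : M.IsHermitian) (j : ℕ) : ℝ :=
  ((Multiset.map hM.eigenvalues Finset.univ.val).sort (· ≤ ·)).getD (Fintype.card n - j) 0

noncomputable def singval {m n : Type} [Fintype m] [Fintype n] [DecidableEq n]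
    (M : Matrix m n ℂ) (j : ℕ) : ℝ :=
  Real.sqrt (eigval (Matrix.isHermitian_conjTranspose_mul_self M) j)

section Helpers

lemma star_dot_self' {ι : Type*} [Fintype ι] (x : ι → ℂ) :
    star x ⬝ᵥ x = ((∑ j, Complex.normSq (x j) : ℝ) : ℂ) := by
  simp only [dotProduct, Pi.star_apply, Complex.ofReal_sum]
  exact Finset.sum_congr rfl fun j _ => by
    rw [Complex.normSq_eq_conj_mul_self]; rfl

lemma dot_mulVec_unitary' {N : ℕ} {W : Matrix (Fin N) (Fin N) ℂ} (hW : Wᴴ * W = 1)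
    (c d : Fin N → ℂ) : star (W *ᵥ c) ⬝ᵥ (W *ᵥ d) = star c ⬝ᵥ d := by
  rw [star_mulVec, ← dotProduct_mulVec, mulVec_mulVec, hW, one_mulVec]

lemma conj_quad' {m n : ℕ} (M : Matrix (Fin m) (Fin n) ℂ) (x : Fin n → ℂ) :
    star x ⬝ᵥ ((Mᴴ * M) *ᵥ x) = ((∑ j, Complex.normSq ((M *ᵥ x) j) : ℝ) : ℂ) := by
  rw [← mulVec_mulVec, dotProduct_mulVec, ← star_mulVec, star_dot_self']

lemma quad_eq_sum' {N : ℕ} {G : Matrix (Fin N) (Fin N) ℂ} (hG : G.IsHermitian) (c : Fin N → ℂ) :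
    star ((hG.eigenvectorUnitary : Matrix (Fin N) (Fin N) ℂ) *ᵥ c) ⬝ᵥ
      (G *ᵥ ((hG.eigenvectorUnitary : Matrix (Fin N) (Fin N) ℂ) *ᵥ c))
      = ((∑ j, hG.eigenvalues j * Complex.normSq (c j) : ℝ) : ℂ) := by
  set W : Matrix (Fin N) (Fin N) ℂ := (hG.eigenvectorUnitary : Matrix (Fin N) (Fin N) ℂ) with hWdef
  set D : Matrix (Fin N) (Fin N) ℂ := Matrix.diagonal (RCLike.ofReal ∘ hG.eigenvalues) with hDdef
  have hW : Wᴴ * W = 1 := by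
    simpa [Matrix.star_eq_conjTranspose] using
      (Matrix.mem_unitaryGroup_iff'.mp hG.eigenvectorUnitary.2)
  have hspec : G = W * D * Wᴴ := by
    exact hG.spectral_theorem
  have h1 : G *ᵥ (W *ᵥ c) = W *ᵥ (D *ᵥ c) := by
    rw [hspec, mulVec_mulVec, Matrix.mul_assoc (W * D), hW, Matrix.mul_one, ← mulVec_mulVec]
  rw [h1, dot_mulVec_unitary' hW]
  simp only [dotProduct, hDdef, mulVec_diagonal, Function.comp_apply, Pi.star_apply,
    Complex.ofReal_sum, Complex.ofReal_mul]
  refine Finset.sum_congr rfl fun j _ => ?_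
  rw [Complex.normSq_eq_conj_mul_self]
  simp only [Complex.star_def]
  exact mul_left_comm ((starRingEnd ℂ) (c j)) ((hG.eigenvalues j : ℝ) : ℂ) (c j)

lemma unitary_decomp' {N : ℕ} {W : Matrix (Fin N) (Fin N) ℂ} (hW : W * Wᴴ = 1)
    (x : Fin N → ℂ) : W *ᵥ (Wᴴ *ᵥ x) = x := by
  rw [mulVec_mulVec, hW, one_mulVec]

lemma mulVec_sq_le' {m n : ℕ} (M : Matrix (Fin m) (Fin n) ℂ) (lam : ℝ)
    (hlam : ∀ j, (isHermitian_conjTranspose_mul_self M).eigenvalues j ≤ lam)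
    (v : Fin n → ℂ) :
    (∑ j, Complex.normSq ((M *ᵥ v) j)) ≤ lam * ∑ j, Complex.normSq (v j) := by
  set hG := isHermitian_conjTranspose_mul_self M with hGdef
  set W : Matrix (Fin n) (Fin n) ℂ := (hG.eigenvectorUnitary : Matrix (Fin n) (Fin n) ℂ) with hWdef
  have hW : Wᴴ * W = 1 := by
    simpa [Matrix.star_eq_conjTranspose] using
      (Matrix.mem_unitaryGroup_iff'.mp hG.eigenvectorUnitary.2)
  have hW2 : W * Wᴴ = 1 := by
    simpa [Matrix.star_eq_conjTranspose] using
      (Matrix.mem_unitaryGroup_iff.mp hG.eigenvectorUnitary.2)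
  set c : Fin n → ℂ := Wᴴ *ᵥ v with hcdef
  have hv : W *ᵥ c = v := unitary_decomp' hW2 v
  have h1 : ((∑ j, Complex.normSq ((M *ᵥ v) j) : ℝ) : ℂ)
      = ((∑ j, hG.eigenvalues j * Complex.normSq (c j) : ℝ) : ℂ) := by
    rw [← conj_quad' M v, ← hv, ← quad_eq_sum' hG c]
  rw [Complex.ofReal_inj] at h1
  have h2 : (∑ j, Complex.normSq (v j) : ℝ) = ∑ j, Complex.normSq (c j) := by
    have := dot_mulVec_unitary' hW c c
    rw [hv, star_dot_self', star_dot_self', Complex.ofReal_inj] at this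
    exact this
  rw [h1, h2, Finset.mul_sum]
  exact Finset.sum_le_sum fun j _ =>
    mul_le_mul_of_nonneg_right (hlam j) (Complex.normSq_nonneg _)

section lists
variable {N : ℕ} {G : Matrix (Fin N) (Fin N) ℂ} (hG : G.IsHermitian)

lemma eiglist_length' :
    ((Multiset.map hG.eigenvalues Finset.univ.val).sort (· ≤ ·)).length = N := by
  rw [Multiset.length_sort, Multiset.card_map]
  simp

lemma eiglist_le_max' (hN : 0 < N) (j : Fin N) :
    hG.eigenvalues j
      ≤ ((Multiset.map hG.eigenvalues Finset.univ.val).sort (· ≤ ·)).getD (N-1) 0 := by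
  set L := ((Multiset.map hG.eigenvalues Finset.univ.val).sort (· ≤ ·)) with hL
  have hlen : L.length = N := eiglist_length' hG
  have hmem : hG.eigenvalues j ∈ L := by
    rw [hL, Multiset.mem_sort]
    exact Multiset.mem_map_of_mem _ (Finset.mem_univ_val _)
  obtain ⟨q, hq⟩ := List.mem_iff_get.mp hmem
  have hsorted : L.Pairwise (· ≤ ·) := Multiset.pairwise_sort _ _
  have h1 : N - 1 < L.length := by omega
  rw [List.getD_eq_getElem L 0 h1]
  have := hsorted.rel_get_of_le (a := q) (b := ⟨N-1, h1⟩) (by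
    have := q.2; simp only [Fin.le_def]; omega)
  rw [hq] at this
  simpa using this

lemma eiglist_count' {p : ℕ} (hp : p < N) {cst : ℝ}
    (h : cst < ((Multiset.map hG.eigenvalues Finset.univ.val).sort (· ≤ ·)).getD p 0) :
    N - p ≤ (Finset.univ.filter (fun j => cst < hG.eigenvalues j)).card := by
  classical
  set L := ((Multiset.map hG.eigenvalues Finset.univ.val).sort (· ≤ ·)) with hL
  have hlen : L.length = N := eiglist_length' hG
  have hsorted : L.Pairwise (· ≤ ·) := Multiset.pairwise_sort _ _
  have hcard : (Finset.univ.filter (fun j => cst < hG.eigenvalues j)).card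
      = L.countP (fun a => decide (cst < a)) := by
    have h1 := Multiset.coe_countP (p := fun a : ℝ => cst < a) L
    rw [hL, Multiset.sort_eq, Multiset.countP_map] at h1
    rw [← h1]
    rfl
  rw [hcard]
  have hdrop : ∀ a ∈ L.drop p, cst < a := by
    intro a ha
    obtain ⟨q, hq⟩ := List.mem_iff_get.mp ha
    have hq2 : (L.drop p).get q = L.get ⟨p + q, by have := q.2; simp at this; omega⟩ := by
      simp [List.getElem_drop]
    have hple : L.getD p 0 ≤ a := by
      rw [List.getD_eq_getElem L 0 (by omega)]
      rw [← hq, hq2]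
      exact hsorted.rel_get_of_le (by simp [Fin.le_def])
    exact lt_of_lt_of_le h hple
  have h2 : (L.drop p).countP (fun a => decide (cst < a)) = (L.drop p).length :=
    List.countP_eq_length.mpr (fun a ha => decide_eq_true (hdrop a ha))
  calc N - p = (L.drop p).length := by rw [List.length_drop, hlen]
  _ = (L.drop p).countP (fun a => decide (cst < a)) := h2.symm
  _ ≤ L.countP (fun a => decide (cst < a)) := by
      conv_rhs => rw [← List.take_append_drop p L]
      rw [List.countP_append]
      omega

end lists

noncomputable def coordSpan' {N : ℕ} (t : Finset (Fin N)) : Submodule ℂ (Fin N → ℂ) :=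
  Submodule.span ℂ (Set.range (fun j : {j // j ∈ t} => (Pi.single (j : Fin N) (1:ℂ) : Fin N → ℂ)))

lemma coordSpan'_apply_eq_zero {N : ℕ} {t : Finset (Fin N)} {x : Fin N → ℂ}
    (hx : x ∈ coordSpan' t) {j : Fin N} (hj : j ∉ t) : x j = 0 := by
  induction hx using Submodule.span_induction with
  | mem v hv =>
    obtain ⟨a, rfl⟩ := hv
    exact Pi.single_eq_of_ne (by rintro rfl; exact hj a.2) 1
  | zero => rfl
  | add u v _ _ h1 h2 => simp [h1, h2]
  | smul c u _ h => simp [h]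

lemma mem_coordSpan' {N : ℕ} {t : Finset (Fin N)} {x : Fin N → ℂ}
    (hx : ∀ j ∉ t, x j = 0) : x ∈ coordSpan' t := by
  have h1 : ∑ j ∈ t, Pi.single j (x j) = x := by
    rw [Finset.sum_subset t.subset_univ (fun j _ hj => by rw [hx j hj, Pi.single_zero])]
    exact Finset.univ_sum_single x
  rw [← h1]
  refine Submodule.sum_mem _ fun j hj => ?_
  have h2 : Pi.single j (x j) = x j • (Pi.single j (1:ℂ) : Fin N → ℂ) := by
    rw [← Pi.single_smul, smul_eq_mul, mul_one]
  rw [h2]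
  exact Submodule.smul_mem _ _ (Submodule.subset_span ⟨⟨j, hj⟩, rfl⟩)

lemma finrank_coordSpan' {N : ℕ} (t : Finset (Fin N)) :
    Module.finrank ℂ (coordSpan' t) = t.card := by
  have li : LinearIndependent ℂ
      (fun j : {j // j ∈ t} => (Pi.single (j : Fin N) (1:ℂ) : Fin N → ℂ)) := by
    have h1 := (Pi.basisFun ℂ (Fin N)).linearIndependent
    have h2 := h1.comp (fun j : {j // j ∈ t} => (j : Fin N)) Subtype.val_injective
    have h3 : (⇑(Pi.basisFun ℂ (Fin N)) ∘ fun j : {j // j ∈ t} => (j : Fin N))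
        = fun j : {j // j ∈ t} => (Pi.single (j : Fin N) (1:ℂ) : Fin N → ℂ) := by
      funext j; simp [Pi.basisFun_apply]
    rwa [h3] at h2
  rw [coordSpan', finrank_span_eq_card li, Fintype.card_coe]

lemma sum_castLE' {M : Type*} [AddCommMonoid M] {n k : ℕ} (hkn : k ≤ n)
    (f : Fin n → M) (hf : ∀ b : Fin n, ¬((b : ℕ) < k) → f b = 0) :
    ∑ b : Fin n, f b = ∑ j : Fin k, f (Fin.castLE hkn j) := by
  rw [← Finset.sum_subset (Finset.filter_subset (fun b : Fin n => (b : ℕ) < k) Finset.univ)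
    (fun b _ hb => hf b (by simpa using hb))]
  refine Finset.sum_bij'
    (i := fun (b : Fin n) (hb : b ∈ Finset.filter (fun b : Fin n => (b : ℕ) < k) Finset.univ) =>
      (⟨(b : ℕ), (Finset.mem_filter.mp hb).2⟩ : Fin k))
    (j := fun (j : Fin k) (_ : j ∈ Finset.univ) => Fin.castLE hkn j) ?_ ?_ ?_ ?_ ?_
  · intro b hb; exact Finset.mem_univ _
  · intro j _
    exact Finset.mem_filter.mpr ⟨Finset.mem_univ _, j.2⟩
  · intro b hb; apply Fin.ext; simp
  · intro j hj; apply Fin.ext; simp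
  · intro b hb
    exact congrArg f (Fin.ext (by simp)).symm

lemma finrank_map_mulVecLin' {N : ℕ} {W : Matrix (Fin N) (Fin N) ℂ} (hW : Wᴴ * W = 1)
    (hW2 : W * Wᴴ = 1) (p : Submodule ℂ (Fin N → ℂ)) :
    Module.finrank ℂ (p.map (Matrix.mulVecLin W)) = Module.finrank ℂ p := by
  let e : (Fin N → ℂ) ≃ₗ[ℂ] (Fin N → ℂ) :=
    LinearEquiv.ofLinear (Matrix.mulVecLin W) (Matrix.mulVecLin Wᴴ)
      (by rw [← Matrix.mulVecLin_mul, hW2, Matrix.mulVecLin_one])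
      (by rw [← Matrix.mulVecLin_mul, hW, Matrix.mulVecLin_one])
  exact LinearEquiv.finrank_map_eq e p

open scoped ComplexOrder in
lemma eig_ata_nonneg' {m n : ℕ} (M : Matrix (Fin m) (Fin n) ℂ) (j : Fin n) :
    0 ≤ (Matrix.isHermitian_conjTranspose_mul_self M).eigenvalues j :=
  (Matrix.posSemidef_conjTranspose_mul_self M).eigenvalues_nonneg j

end Helpers

set_option maxHeartbeats 2000000 in
/-- For each i = 1,…,k, sin∠ᵢ(U_k, Û_l) ≤ σ₁((I − Û_l Û_l*) A) / σᵢ. -/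
theorem residual_bound_left_second_term
    {m n k l : ℕ} (hkm : k ≤ m) (hkn : k ≤ n)
    (A : Matrix (Fin m) (Fin n) ℂ)
    (U : Matrix (Fin m) (Fin m) ℂ) (V : Matrix (Fin n) (Fin n) ℂ) (σ : ℕ → ℝ)
    (hU : U ∈ Matrix.unitaryGroup (Fin m) ℂ) (hV : V ∈ Matrix.unitaryGroup (Fin n) ℂ)
    (hσdec : ∀ i j : ℕ, 1 ≤ i → i ≤ j → σ j ≤ σ i) (hσnn : ∀ j, 0 ≤ σ j)
    (hσk : 0 < σ k)
    (hA : A = U * (Matrix.of fun (i : Fin m) (j : Fin n) =>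
      if (i : ℕ) = (j : ℕ) then (σ ((i : ℕ) + 1) : ℂ) else 0) * Vᴴ)
    (hatU : Matrix (Fin m) (Fin l) ℂ)
    (horth : hatUᴴ * hatU = 1)
    (hrange : ∃ B : Matrix (Fin n) (Fin l) ℂ, hatU = A * B) :
    ∀ i : ℕ, 1 ≤ i → i ≤ k →
      singval ((1 - hatU * hatUᴴ) * U.submatrix id (Fin.castLE hkm)) (k - i + 1)
        ≤ singval ((1 - hatU * hatUᴴ) * A) 1 / σ i := by
  intro i hi1 hik
  classical
  have hσi : 0 < σ i := lt_of_lt_of_le hσk (hσdec i k hi1 hik)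
  have hn1 : 1 ≤ n := le_trans (le_trans hi1 hik) hkn
  set Sig : Matrix (Fin m) (Fin n) ℂ := Matrix.of fun (i : Fin m) (j : Fin n) =>
      if (i : ℕ) = (j : ℕ) then (σ ((i : ℕ) + 1) : ℂ) else 0 with hSig
  set P : Matrix (Fin m) (Fin m) ℂ := 1 - hatU * hatUᴴ with hPdef
  set M₁ : Matrix (Fin m) (Fin k) ℂ := P * U.submatrix id (Fin.castLE hkm) with hM₁
  set M₂ : Matrix (Fin m) (Fin n) ℂ := P * A with hM₂
  set hG₁ : (M₁ᴴ * M₁).IsHermitian := Matrix.isHermitian_conjTranspose_mul_self M₁ with hG₁def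
  set hG₂ : (M₂ᴴ * M₂).IsHermitian := Matrix.isHermitian_conjTranspose_mul_self M₂ with hG₂def
  set L₁ : List ℝ := (Multiset.map hG₁.eigenvalues Finset.univ.val).sort (· ≤ ·) with hL₁
  set L₂ : List ℝ := (Multiset.map hG₂.eigenvalues Finset.univ.val).sort (· ≤ ·) with hL₂
  have hgoal : singval M₁ (k - i + 1) = Real.sqrt (L₁.getD (i-1) 0) := by
    simp only [singval, eigval, Fintype.card_fin]
    congr 2
    omega
  have hgoal2 : singval M₂ 1 = Real.sqrt (L₂.getD (n-1) 0) := by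
    simp only [singval, eigval, Fintype.card_fin]
    rfl
  rw [hgoal, hgoal2]
  set lam : ℝ := L₂.getD (n-1) 0 with hlam
  -- lam is nonnegative
  have hlen₂ : L₂.length = n := eiglist_length' hG₂
  have hlam0 : 0 ≤ lam := by
    have h1 : n - 1 < L₂.length := by omega
    rw [hlam, List.getD_eq_getElem _ _ h1]
    have hmem : L₂[n-1] ∈ L₂ := List.getElem_mem h1
    have hmem2 : L₂[n-1] ∈ Multiset.map hG₂.eigenvalues Finset.univ.val :=
      (Multiset.mem_sort (· ≤ ·)).mp hmem
    obtain ⟨j, _, hj⟩ := Multiset.mem_map.mp hmem2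
    rw [← hj]
    exact eig_ata_nonneg' M₂ j
  have hmax : ∀ j, hG₂.eigenvalues j ≤ lam := fun j => eiglist_le_max' hG₂ (by omega) j
  -- the key inequality
  have key : L₁.getD (i-1) 0 ≤ lam / (σ i)^2 := by
    by_contra hcon
    push_neg at hcon
    set cst : ℝ := lam / (σ i)^2 with hcst
    -- the eigenvector unitary of M₁ᴴM₁
    set W₁ : Matrix (Fin k) (Fin k) ℂ :=
      (hG₁.eigenvectorUnitary : Matrix (Fin k) (Fin k) ℂ) with hW₁def
    have hW₁ : W₁ᴴ * W₁ = 1 := by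
      simpa [Matrix.star_eq_conjTranspose] using
        (Matrix.mem_unitaryGroup_iff'.mp hG₁.eigenvectorUnitary.2)
    have hW₁2 : W₁ * W₁ᴴ = 1 := by
      simpa [Matrix.star_eq_conjTranspose] using
        (Matrix.mem_unitaryGroup_iff.mp hG₁.eigenvectorUnitary.2)
    set t₁ : Finset (Fin k) := Finset.univ.filter (fun j => cst < hG₁.eigenvalues j) with ht₁
    have htcard : k - (i-1) ≤ t₁.card := eiglist_count' hG₁ (by omega) hcon
    set si : Finset (Fin k) := Finset.univ.filter (fun j : Fin k => (j : ℕ) < i) with hsi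
    have hsicard : si.card = i := by
      have h := Finset.card_bij'
        (s := si) (t := (Finset.univ : Finset (Fin i)))
        (i := fun (j : Fin k) (hj : j ∈ si) =>
          (⟨(j : ℕ), by simpa [hsi] using (Finset.mem_filter.mp hj).2⟩ : Fin i))
        (j := fun (a : Fin i) (_ : a ∈ Finset.univ) =>
          (⟨(a : ℕ), lt_of_lt_of_le a.2 hik⟩ : Fin k))
        (fun j hj => Finset.mem_univ _)
        (fun a _ => Finset.mem_filter.mpr ⟨Finset.mem_univ _, a.2⟩)
        (fun j hj => Fin.ext (by simp))
        (fun a _ => Fin.ext (by simp))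
      rw [h, Finset.card_univ, Fintype.card_fin]
    set S : Submodule ℂ (Fin k → ℂ) := coordSpan' si with hS
    set T : Submodule ℂ (Fin k → ℂ) := (coordSpan' t₁).map (Matrix.mulVecLin W₁) with hT
    have hfS : Module.finrank ℂ S = i := by rw [hS, finrank_coordSpan', hsicard]
    have hfT : Module.finrank ℂ T = t₁.card := by
      rw [hT, finrank_map_mulVecLin' hW₁ hW₁2, finrank_coordSpan']
    have hinf : 0 < Module.finrank ℂ (S ⊓ T : Submodule ℂ (Fin k → ℂ)) := by
      have h1 := Submodule.finrank_sup_add_finrank_inf_eq S T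
      have h2 : Module.finrank ℂ (S ⊔ T : Submodule ℂ (Fin k → ℂ)) ≤ k :=
        le_trans (Submodule.finrank_le _)
          (le_of_eq (by rw [Module.finrank_fintype_fun_eq_card, Fintype.card_fin]))
      have h3 : t₁.card ≤ k := le_trans (Finset.card_le_univ t₁) (by simp)
      omega
    -- pick a nonzero vector in the intersection
    have : Nontrivial (S ⊓ T : Submodule ℂ (Fin k → ℂ)) := Module.finrank_pos_iff.mp hinf
    obtain ⟨v, hv⟩ := exists_ne (0 : (S ⊓ T : Submodule ℂ (Fin k → ℂ)))
    set x : Fin k → ℂ := (v : Fin k → ℂ) with hx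
    have hx0 : x ≠ 0 := fun h => hv (Subtype.ext h)
    have hxS : x ∈ S := v.2.1
    have hxT : x ∈ T := v.2.2
    obtain ⟨c, hcmem, hceq⟩ := Submodule.mem_map.mp hxT
    rw [Matrix.mulVecLin_apply] at hceq
    have hcsupp : ∀ j ∉ t₁, c j = 0 := fun j hj => coordSpan'_apply_eq_zero hcmem hj
    have hxsupp : ∀ j : Fin k, ¬((j : ℕ) < i) → x j = 0 := fun j hj =>
      coordSpan'_apply_eq_zero hxS (by simp [hsi, hj])
    set q : ℝ := ∑ j, hG₁.eigenvalues j * Complex.normSq (c j) with hq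
    -- (1) q = ‖M₁ x‖²
    have hq_eq : (∑ j, Complex.normSq ((M₁ *ᵥ x) j) : ℝ) = q := by
      have h1 := quad_eq_sum' hG₁ c
      rw [hceq] at h1
      have h2 := conj_quad' M₁ x
      rw [h2] at h1
      exact_mod_cast h1
    -- (2) ‖x‖² = ‖c‖²
    have hsx_eq : (∑ j, Complex.normSq (x j) : ℝ) = ∑ j, Complex.normSq (c j) := by
      have h1 := dot_mulVec_unitary' hW₁ c c
      rw [hceq, star_dot_self', star_dot_self', Complex.ofReal_inj] at h1
      exact h1
    have hsx_pos : 0 < (∑ j, Complex.normSq (x j) : ℝ) := by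
      obtain ⟨j, hj⟩ := Function.ne_iff.mp hx0
      exact Finset.sum_pos' (fun j _ => Complex.normSq_nonneg _)
        ⟨j, Finset.mem_univ j, Complex.normSq_pos.mpr hj⟩
    -- (3) lower bound : cst * ‖x‖² < q
    have hlower : cst * (∑ j, Complex.normSq (x j)) < q := by
      have hterm : ∀ j ∈ Finset.univ, 0 ≤ (hG₁.eigenvalues j - cst) * Complex.normSq (c j) := by
        intro j _
        by_cases hj : j ∈ t₁
        · have h1 : cst < hG₁.eigenvalues j := (Finset.mem_filter.mp hj).2
          exact mul_nonneg (by linarith) (Complex.normSq_nonneg _)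
        · rw [hcsupp j hj]; simp
      have hcj : ∃ j₀, c j₀ ≠ 0 := by
        by_contra h
        push_neg at h
        apply hx0
        have : c = 0 := funext h
        rw [this, Matrix.mulVec_zero] at hceq
        exact hceq.symm
      obtain ⟨j₀, hj₀⟩ := hcj
      have hj₀t : j₀ ∈ t₁ := by
        by_contra h
        exact hj₀ (hcsupp j₀ h)
      have hpos : 0 < (hG₁.eigenvalues j₀ - cst) * Complex.normSq (c j₀) :=
        mul_pos (sub_pos.mpr (Finset.mem_filter.mp hj₀t).2) (Complex.normSq_pos.mpr hj₀)
      have hsum := Finset.sum_pos' hterm ⟨j₀, Finset.mem_univ j₀, hpos⟩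
      have hexp : ∑ j, (hG₁.eigenvalues j - cst) * Complex.normSq (c j)
          = q - cst * ∑ j, Complex.normSq (c j) := by
        rw [hq, Finset.mul_sum, ← Finset.sum_sub_distrib]
        exact Finset.sum_congr rfl fun j _ => by ring
      rw [hexp] at hsum
      rw [hsx_eq]
      linarith
    -- (4) upper bound : q ≤ cst * ‖x‖²
    have hupper : q ≤ cst * (∑ j, Complex.normSq (x j)) := by
      set y' : Fin n → ℂ :=
        fun j => if h : (j : ℕ) < k then x ⟨(j : ℕ), h⟩ / (σ ((j : ℕ) + 1) : ℝ) else 0 with hy'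
      set w : Fin n → ℂ := V *ᵥ y' with hw
      have hV' : Vᴴ * V = 1 := by
        simpa [Matrix.star_eq_conjTranspose] using (Matrix.mem_unitaryGroup_iff'.mp hV)
      -- the crucial identity
      have hMM : M₁ *ᵥ x = M₂ *ᵥ w := by
        set g : Fin m → ℂ := fun b => if h : (b : ℕ) < k then x ⟨(b : ℕ), h⟩ else 0 with hg
        have hUsx : U.submatrix id (Fin.castLE hkm) *ᵥ x = U *ᵥ g := by
          funext a
          show (∑ j : Fin k, U.submatrix id (Fin.castLE hkm) a j * x j) = ∑ b, U a b * g b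
          rw [sum_castLE' hkm (f := fun b : Fin m => U a b * g b)
            (fun b hb => by rw [hg]; simp only; rw [dif_neg hb, mul_zero])]
          refine Finset.sum_congr rfl fun j _ => ?_
          rw [Matrix.submatrix_apply, id_eq, hg]
          simp only
          rw [dif_pos (by simpa using j.2)]
          exact congrArg (fun z => U a (Fin.castLE hkm j) * z) (congrArg x (Fin.ext rfl)).symm
        have hSigy : Sig *ᵥ y' = g := by
          funext a
          show (∑ j : Fin n, Sig a j * y' j) = g a
          by_cases han : (a : ℕ) < n
          · rw [Finset.sum_eq_single (⟨(a : ℕ), han⟩ : Fin n)]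
            · rw [hSig, hg]
              simp only [Matrix.of_apply, if_pos rfl, hy']
              by_cases hak : (a : ℕ) < k
              · rw [dif_pos hak, dif_pos hak]
                have hσa : ((σ ((a : ℕ) + 1) : ℝ) : ℂ) ≠ 0 := by
                  have h0 : 0 < σ ((a : ℕ) + 1) :=
                    lt_of_lt_of_le hσk (hσdec ((a : ℕ) + 1) k (by omega) (by omega))
                  exact_mod_cast ne_of_gt h0
                rw [mul_div_assoc']
                exact mul_div_cancel_left₀ _ hσa
              · rw [dif_neg hak, dif_neg hak, mul_zero]
            · intro j _ hja
              rw [hSig]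
              simp only [Matrix.of_apply]
              rw [if_neg (fun h => hja (Fin.ext h.symm)), zero_mul]
            · intro h
              exact absurd (Finset.mem_univ _) h
          · rw [Finset.sum_eq_zero, hg]
            · simp only
              rw [dif_neg (by omega)]
            · intro j _
              rw [hSig]
              simp only [Matrix.of_apply]
              rw [if_neg (fun h => han (by rw [h]; exact j.2)), zero_mul]
        have hAw : A *ᵥ w = U *ᵥ (Sig *ᵥ y') := by
          rw [hw, hA, Matrix.mulVec_mulVec, Matrix.mul_assoc (U * Sig) Vᴴ V, hV',
            Matrix.mul_one, ← Matrix.mulVec_mulVec]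
        rw [hM₁, hM₂, ← Matrix.mulVec_mulVec, ← Matrix.mulVec_mulVec, hUsx, hAw, hSigy]
      have hb1 : (∑ j, Complex.normSq ((M₂ *ᵥ w) j)) ≤ lam * ∑ j, Complex.normSq (w j) :=
        mulVec_sq_le' M₂ lam hmax w
      have hw_eq : (∑ j, Complex.normSq (w j) : ℝ) = ∑ j, Complex.normSq (y' j) := by
        have h1 := dot_mulVec_unitary' hV' y' y'
        rw [← hw, star_dot_self', star_dot_self', Complex.ofReal_inj] at h1
        exact h1
      have hy'_le : (∑ j, Complex.normSq (y' j) : ℝ)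
          ≤ (∑ j, Complex.normSq (x j)) / (σ i)^2 := by
        set F : Fin n → ℝ := fun j =>
          if h : (j : ℕ) < k then Complex.normSq (x ⟨(j : ℕ), h⟩) / (σ i)^2 else 0 with hF
        have hterm2 : ∀ j ∈ (Finset.univ : Finset (Fin n)), Complex.normSq (y' j) ≤ F j := by
          intro j _
          rw [hy', hF]
          simp only
          by_cases hjk : (j : ℕ) < k
          · rw [dif_pos hjk, dif_pos hjk]
            by_cases hji : (j : ℕ) < i
            · have hσj : σ i ≤ σ ((j : ℕ) + 1) := hσdec ((j : ℕ) + 1) i (by omega) (by omega)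
              have h0 : (0 : ℝ) < σ ((j : ℕ) + 1) := lt_of_lt_of_le hσi hσj
              rw [Complex.normSq_div, Complex.normSq_ofReal]
              exact div_le_div_of_nonneg_left (Complex.normSq_nonneg _) (by positivity)
                (by nlinarith)
            · rw [hxsupp ⟨(j : ℕ), hjk⟩ (by simpa using hji)]
              simp
          · rw [dif_neg hjk, dif_neg hjk]
            simp
        calc (∑ j, Complex.normSq (y' j) : ℝ) ≤ ∑ j, F j := Finset.sum_le_sum hterm2
        _ = ∑ j : Fin k, F (Fin.castLE hkn j) :=
            sum_castLE' hkn F (fun b hb => by rw [hF]; simp only; rw [dif_neg hb])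
        _ = ∑ j : Fin k, Complex.normSq (x j) / (σ i)^2 := by
            refine Finset.sum_congr rfl fun j _ => ?_
            rw [hF]
            simp only
            rw [dif_pos (by simpa using j.2)]
            exact congrArg (fun z => z / (σ i)^2) (congrArg Complex.normSq (congrArg x (Fin.ext rfl)))
        _ = (∑ j, Complex.normSq (x j)) / (σ i)^2 := by rw [Finset.sum_div]
      have hchain : q ≤ lam * ((∑ j, Complex.normSq (x j)) / (σ i)^2) := by
        rw [← hq_eq, hMM]
        calc (∑ j, Complex.normSq ((M₂ *ᵥ w) j)) ≤ lam * ∑ j, Complex.normSq (w j) := hb1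
        _ = lam * ∑ j, Complex.normSq (y' j) := by rw [hw_eq]
        _ ≤ lam * ((∑ j, Complex.normSq (x j)) / (σ i)^2) :=
            mul_le_mul_of_nonneg_left hy'_le hlam0
      calc q ≤ lam * ((∑ j, Complex.normSq (x j)) / (σ i)^2) := hchain
      _ = cst * (∑ j, Complex.normSq (x j)) := by rw [hcst]; ring
    linarith
  calc Real.sqrt (L₁.getD (i-1) 0) ≤ Real.sqrt (lam / (σ i)^2) := Real.sqrt_le_sqrt key
  _ = Real.sqrt lam / σ i := by
      rw [Real.sqrt_div hlam0, Real.sqrt_sq hσi.le]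
end

section
/- Residual-based bound on the canonical angles between exact and approximate rank-l right singular subspaces: in the block setting below, every unitarily invariant norm satisfies ⦀Ṽ₃₁⦀ ≤ (‖E₃₃‖₂/σ_k)·⦀Ũ₃₁⦀; consequently, if ⦀Ũ₃₁⦀ ≤ ⦀[E₃₁,E₃₂]⦀/Γ₁ with Γ₁ = (σ_k² − ‖E₃₃‖₂²)/σ_k, then ⦀Ṽ₃₁⦀ ≤ ⦀[E₃₁,E₃₂]⦀/Γ₂ where Γ₂ = (σ_k² − ‖E₃₃‖₂²)/‖E₃₃‖₂. -/
open Matrix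

/-- A family of unitarily invariant matrix norms (one for every shape). -/
structure UINorm where
  N : ∀ {p q : Type} [Fintype p] [Fintype q] [DecidableEq p] [DecidableEq q],
      Matrix p q ℂ → ℝ
  nonneg : ∀ {p q : Type} [Fintype p] [Fintype q] [DecidableEq p] [DecidableEq q]
      (M : Matrix p q ℂ), 0 ≤ N M
  triangle : ∀ {p q : Type} [Fintype p] [Fintype q] [DecidableEq p] [DecidableEq q]
      (M₁ M₂ : Matrix p q ℂ), N (M₁ + M₂) ≤ N M₁ + N M₂
  unitary_invariant : ∀ {p q : Type} [Fintype p] [Fintype q] [DecidableEq p] [DecidableEq q]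
      (U : Matrix p p ℂ) (M : Matrix p q ℂ) (V : Matrix q q ℂ),
      U ∈ Matrix.unitaryGroup p ℂ → V ∈ Matrix.unitaryGroup q ℂ → N (U * M * V) = N M
  spec_mul : ∀ {p q r : Type} [Fintype p] [Fintype q] [Fintype r]
      [DecidableEq p] [DecidableEq q] [DecidableEq r]
      (X : Matrix p q ℂ) (Y : Matrix q r ℂ), N (X * Y) ≤ singval X 1 * N Y
  mul_spec : ∀ {p q r : Type} [Fintype p] [Fintype q] [Fintype r]
      [DecidableEq p] [DecidableEq q] [DecidableEq r]
      (X : Matrix p q ℂ) (Y : Matrix q r ℂ), N (X * Y) ≤ N X * singval Y 1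


-- ======================= auxiliary lemmas =======================

lemma herm_dot {n : Type} [Fintype n] {A : Matrix n n ℂ} (hA : A.IsHermitian)
    (x u : n → ℂ) : star x ⬝ᵥ (A *ᵥ u) = star (A *ᵥ x) ⬝ᵥ u := by
  rw [star_mulVec, hA.eq, Matrix.dotProduct_mulVec]

lemma exists_eigenvalue_eq {n : Type} [Fintype n] [DecidableEq n]
    {A : Matrix n n ℂ} (hA : A.IsHermitian) {μ : ℝ} {u : n → ℂ}
    (hu : u ≠ 0) (h : A *ᵥ u = (μ : ℂ) • u) : ∃ i, hA.eigenvalues i = μ := by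
  by_contra hc
  push_neg at hc
  have key : ∀ i, star ⇑(hA.eigenvectorBasis i) ⬝ᵥ u = 0 := by
    intro i
    have h1 : star ⇑(hA.eigenvectorBasis i) ⬝ᵥ (A *ᵥ u)
        = (μ : ℂ) * (star ⇑(hA.eigenvectorBasis i) ⬝ᵥ u) := by
      rw [h, dotProduct_smul]; rfl
    have h2 : star ⇑(hA.eigenvectorBasis i) ⬝ᵥ (A *ᵥ u)
        = (hA.eigenvalues i : ℂ) * (star ⇑(hA.eigenvectorBasis i) ⬝ᵥ u) := by
      rw [herm_dot hA, hA.mulVec_eigenvectorBasis]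
      have : star ((hA.eigenvalues i) • ⇑(hA.eigenvectorBasis i))
          = (hA.eigenvalues i : ℂ) • star ⇑(hA.eigenvectorBasis i) := by
        rw [star_smul]
        norm_num
      rw [this, smul_dotProduct]
      rfl
    have h3 : ((hA.eigenvalues i : ℂ) - μ) * (star ⇑(hA.eigenvectorBasis i) ⬝ᵥ u) = 0 := by
      rw [sub_mul, ← h2, h1]; ring
    rcases mul_eq_zero.mp h3 with h4 | h4
    · exact absurd (by exact_mod_cast sub_eq_zero.mp h4) (hc i)
    · exact h4
  apply hu
  have : (WithLp.toLp 2 u : EuclideanSpace ℂ n) = 0 := by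
    have hrepr : (hA.eigenvectorBasis).repr (WithLp.toLp 2 u : EuclideanSpace ℂ n) = 0 := by
      ext i
      rw [OrthonormalBasis.repr_apply_apply]
      simpa [EuclideanSpace.inner_eq_star_dotProduct] using (dotProduct_comm _ _).trans (key i)
    simpa using congrArg (hA.eigenvectorBasis).repr.symm hrepr
  simpa using congrArg WithLp.ofLp this

lemma eigval_length {n : Type} [Fintype n] [DecidableEq n] {M : Matrix n n ℂ}
    (hM : M.IsHermitian) :
    ((Multiset.map hM.eigenvalues Finset.univ.val).sort (· ≤ ·)).length = Fintype.card n := by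
  rw [Multiset.length_sort, Multiset.card_map]
  simp [Finset.card_univ]

lemma eigval_one_cases {n : Type} [Fintype n] [DecidableEq n] {M : Matrix n n ℂ}
    (hM : M.IsHermitian) :
    eigval hM 1 = 0 ∨ ∃ i, hM.eigenvalues i = eigval hM 1 := by
  set L := ((Multiset.map hM.eigenvalues Finset.univ.val).sort (· ≤ ·)) with hL
  by_cases hn : Fintype.card n = 0
  · left
    have : L.length = 0 := by rw [eigval_length]; exact hn
    rw [List.length_eq_zero_iff] at this
    simp [eigval, ← hL, this]
  · right
    have hlt : Fintype.card n - 1 < L.length := by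
      rw [eigval_length]; omega
    have hmem : L.getD (Fintype.card n - 1) 0 ∈ L := by
      rw [List.getD_eq_getElem?_getD, List.getElem?_eq_getElem hlt, Option.getD_some]; exact List.getElem_mem _
    rw [hL, Multiset.mem_sort, Multiset.mem_map] at hmem
    obtain ⟨i, _, hi⟩ := hmem
    exact ⟨i, hi⟩

lemma eigval_one_le {n : Type} [Fintype n] [DecidableEq n] {M : Matrix n n ℂ}
    (hM : M.IsHermitian) {c : ℝ} (hc : 0 ≤ c) (h : ∀ i, hM.eigenvalues i ≤ c) :
    eigval hM 1 ≤ c := by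
  rcases eigval_one_cases hM with h0 | ⟨i, hi⟩
  · rw [h0]; exact hc
  · rw [← hi]; exact h i

lemma le_eigval_one {n : Type} [Fintype n] [DecidableEq n] {M : Matrix n n ℂ}
    (hM : M.IsHermitian) (i : n) : hM.eigenvalues i ≤ eigval hM 1 := by
  set L := ((Multiset.map hM.eigenvalues Finset.univ.val).sort (· ≤ ·)) with hL
  have hcard : 0 < Fintype.card n := Fintype.card_pos_iff.mpr ⟨i⟩
  have hlt : Fintype.card n - 1 < L.length := by rw [eigval_length]; omega
  have hmem : hM.eigenvalues i ∈ L := by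
    rw [hL, Multiset.mem_sort, Multiset.mem_map]
    exact ⟨i, Finset.mem_univ _, rfl⟩
  obtain ⟨t, ht⟩ := List.mem_iff_get.mp hmem
  have hsorted : L.Pairwise (· ≤ ·) := Multiset.pairwise_sort _ _
  have : L.get t ≤ L.get ⟨Fintype.card n - 1, hlt⟩ := by
    rcases lt_or_eq_of_le (Nat.le_pred_of_lt (lt_of_lt_of_eq t.isLt (eigval_length hM))) with h' | h'
    · exact List.pairwise_iff_get.mp hsorted t ⟨Fintype.card n - 1, hlt⟩ (Fin.lt_def.mpr h')
    · have : t = ⟨Fintype.card n - 1, hlt⟩ := Fin.ext (by simpa using h')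
      rw [this]
  rw [← ht]
  calc L.get t ≤ L.get ⟨Fintype.card n - 1, hlt⟩ := this
    _ = eigval hM 1 := by rw [eigval, ← hL, List.getD_eq_getElem?_getD, List.getElem?_eq_getElem hlt, Option.getD_some]; rfl

lemma singval_nonneg {m n : Type} [Fintype m] [Fintype n] [DecidableEq n]
    (M : Matrix m n ℂ) (j : ℕ) : 0 ≤ singval M j := Real.sqrt_nonneg _

lemma eigenvalue_of_diag {n : Type} [Fintype n] [DecidableEq n]
    {A : Matrix n n ℂ} (hA : A.IsHermitian) {e : n → ℂ} (hAe : A = Matrix.diagonal e)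
    (i : n) : ∃ j, e j = (hA.eigenvalues i : ℂ) := by
  obtain ⟨v, hvne, hveq⟩ : ∃ v : n → ℂ, v ≠ 0 ∧
      Matrix.diagonal e *ᵥ v = (hA.eigenvalues i) • v := by
    refine ⟨⇑(hA.eigenvectorBasis i), ?_, ?_⟩
    · intro h0
      exact hA.eigenvectorBasis.orthonormal.ne_zero i (by ext j; exact congrFun h0 j)
    · rw [← hAe]
      exact hA.mulVec_eigenvectorBasis i
  obtain ⟨j, hj⟩ := Function.ne_iff.mp hvne
  refine ⟨j, ?_⟩
  have h1 := congrFun hveq j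
  rw [Matrix.mulVec_diagonal] at h1
  have h2 : ((hA.eigenvalues i) • v) j = (hA.eigenvalues i : ℂ) * v j := by
    simp [Complex.real_smul]
  rw [h2] at h1
  exact mul_right_cancel₀ (by simpa using hj) h1

lemma real_smul_eq_complex_smul {n : Type} (μ : ℝ) (w : n → ℂ) :
    μ • w = (μ : ℂ) • w := by
  funext j; simp [Complex.real_smul]

lemma singval_conjTranspose_le {m n : Type} [Fintype m] [Fintype n]
    [DecidableEq m] [DecidableEq n] (M : Matrix m n ℂ) :
    singval Mᴴ 1 ≤ singval M 1 := by
  have hs : 0 ≤ singval M 1 := singval_nonneg M 1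
  rw [singval]
  rw [show singval M 1 = Real.sqrt ((singval M 1) ^ 2) from (Real.sqrt_sq hs).symm]
  apply Real.sqrt_le_sqrt
  have hB := Matrix.isHermitian_conjTranspose_mul_self Mᴴ
  apply eigval_one_le hB (by positivity)
  intro i
  have hMM : M * Mᴴ = Mᴴᴴ * Mᴴ := by rw [Matrix.conjTranspose_conjTranspose]
  have hv : (M * Mᴴ) *ᵥ ⇑(hB.eigenvectorBasis i) = ((hB.eigenvalues i : ℝ) : ℂ)
      • ⇑(hB.eigenvectorBasis i) := by
    rw [hMM, ← real_smul_eq_complex_smul]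
    exact hB.mulVec_eigenvectorBasis i
  have hwne : ⇑(hB.eigenvectorBasis i) ≠ 0 := by
    intro h0
    exact hB.eigenvectorBasis.orthonormal.ne_zero i (by ext j; exact congrFun h0 j)
  have hAu : (Mᴴ * M) *ᵥ (Mᴴ *ᵥ ⇑(hB.eigenvectorBasis i))
      = ((hB.eigenvalues i : ℝ) : ℂ) • (Mᴴ *ᵥ ⇑(hB.eigenvectorBasis i)) := by
    rw [Matrix.mulVec_mulVec, Matrix.mul_assoc, ← Matrix.mulVec_mulVec, hv,
      Matrix.mulVec_smul]
  by_cases hu0 : Mᴴ *ᵥ ⇑(hB.eigenvectorBasis i) = 0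
  · have h0 : ((hB.eigenvalues i : ℝ) : ℂ) • ⇑(hB.eigenvectorBasis i) = 0 := by
      rw [← hv, ← Matrix.mulVec_mulVec, hu0, Matrix.mulVec_zero]
    rcases smul_eq_zero.mp h0 with h | h
    · have : hB.eigenvalues i = 0 := by exact_mod_cast h
      rw [this]
      positivity
    · exact absurd h hwne
  · obtain ⟨j, hj⟩ := exists_eigenvalue_eq (Matrix.isHermitian_conjTranspose_mul_self M) hu0 hAu
    have h1 : hB.eigenvalues i ≤ eigval (Matrix.isHermitian_conjTranspose_mul_self M) 1 := by
      rw [← hj]; exact le_eigval_one _ j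
    have h2 : 0 ≤ eigval (Matrix.isHermitian_conjTranspose_mul_self M) 1 := by
      refine le_trans ?_ (le_eigval_one _ j)
      exact Matrix.eigenvalues_conjTranspose_mul_self_nonneg M j
    calc hB.eigenvalues i ≤ eigval (Matrix.isHermitian_conjTranspose_mul_self M) 1 := h1
      _ = (singval M 1) ^ 2 := by rw [singval, Real.sq_sqrt h2]

lemma singval_diagonal_le {n : Type} [Fintype n] [DecidableEq n]
    (e : n → ℂ) {c : ℝ} (hc : 0 ≤ c) (h : ∀ j, ‖e j‖ ≤ c) :
    singval (Matrix.diagonal e) 1 ≤ c := by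
  rw [singval]
  rw [show c = Real.sqrt (c ^ 2) from (Real.sqrt_sq hc).symm]
  apply Real.sqrt_le_sqrt
  set hB := Matrix.isHermitian_conjTranspose_mul_self (Matrix.diagonal e)
  apply eigval_one_le hB (by positivity)
  intro i
  have hdiag : (Matrix.diagonal e)ᴴ * Matrix.diagonal e
      = Matrix.diagonal (fun j => star (e j) * e j) := by
    rw [Matrix.diagonal_conjTranspose, Matrix.diagonal_mul_diagonal]
    rfl
  obtain ⟨j, hj⟩ := eigenvalue_of_diag hB hdiag i
  have hval : (hB.eigenvalues i) = Complex.normSq (e j) := by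
    have : star (e j) * e j = (Complex.normSq (e j) : ℂ) := by
      rw [Complex.star_def, mul_comm, Complex.mul_conj]
    rw [this] at hj
    exact_mod_cast hj.symm
  rw [hval, ← Complex.sq_norm]
  exact pow_le_pow_left₀ (norm_nonneg _) (h j) 2

/-- If Ũ₃₁* E₃₃ = Σ_k Ṽ₃₁* with ‖E₃₃‖₂ < σ_k, then every unitarily invariant norm
satisfies ⦀Ṽ₃₁⦀ ≤ (‖E₃₃‖₂/σ_k)·⦀Ũ₃₁⦀; consequently, if ⦀Ũ₃₁⦀ ≤ ⦀[E₃₁,E₃₂]⦀/Γ₁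
then ⦀Ṽ₃₁⦀ ≤ ⦀[E₃₁,E₃₂]⦀/Γ₂. -/
theorem right_angle_from_left_angle
    {k p nl : ℕ}
    (σ : ℕ → ℝ) (hσdec : ∀ i j : ℕ, 1 ≤ i → i ≤ j → σ j ≤ σ i) (hσk : 0 < σ k)
    (U31 : Matrix (Fin p) (Fin k) ℂ) (V31 : Matrix (Fin nl) (Fin k) ℂ)
    (E33 : Matrix (Fin p) (Fin nl) ℂ)
    (hE33 : singval E33 1 < σ k)
    (hrel : U31ᴴ * E33 = (Matrix.diagonal fun t : Fin k => (σ ((t : ℕ) + 1) : ℂ)) * V31ᴴ) :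
    ∀ nrm : UINorm,
      nrm.N V31 ≤ (singval E33 1 / σ k) * nrm.N U31 ∧
      ∀ (lk : ℕ) (E31 : Matrix (Fin p) (Fin k) ℂ) (E32 : Matrix (Fin p) (Fin lk) ℂ),
        nrm.N U31 ≤ nrm.N (Matrix.fromCols E31 E32)
            / ((σ k ^ 2 - singval E33 1 ^ 2) / σ k) →
        nrm.N V31 ≤ nrm.N (Matrix.fromCols E31 E32)
            / ((σ k ^ 2 - singval E33 1 ^ 2) / singval E33 1) := by
  intro nrm
  set D := Matrix.diagonal (fun t : Fin k => (σ ((t : ℕ) + 1) : ℂ)) with hD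
  set Di := Matrix.diagonal (fun t : Fin k => ((σ ((t : ℕ) + 1) : ℂ))⁻¹) with hDi
  have hσt : ∀ t : Fin k, 0 < σ ((t : ℕ) + 1) ∧ σ k ≤ σ ((t : ℕ) + 1) := by
    intro t
    have h1 : σ k ≤ σ ((t : ℕ) + 1) := hσdec ((t : ℕ) + 1) k (Nat.le_add_left 1 _) t.isLt
    exact ⟨lt_of_lt_of_le hσk h1, h1⟩
  have hDDi : D * Di = 1 := by
    rw [hD, hDi, Matrix.diagonal_mul_diagonal]
    rw [show (fun t : Fin k => (σ ((t : ℕ) + 1) : ℂ) * ((σ ((t : ℕ) + 1) : ℂ))⁻¹) = fun _ => 1 by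
      funext t
      exact mul_inv_cancel₀ (by exact_mod_cast (hσt t).1.ne')]
    exact Matrix.diagonal_one
  have h1 : E33ᴴ * U31 = V31 * D := by
    have hstar : (star fun t : Fin k => (σ ((t : ℕ) + 1) : ℂ))
        = fun t : Fin k => (σ ((t : ℕ) + 1) : ℂ) := by
      funext t
      simp [Complex.conj_ofReal]
    have h := congrArg Matrix.conjTranspose hrel
    rw [Matrix.conjTranspose_mul, Matrix.conjTranspose_mul, Matrix.conjTranspose_conjTranspose,
      Matrix.conjTranspose_conjTranspose, Matrix.diagonal_conjTranspose, hstar] at h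
    rw [hD]
    exact h
  have hV : V31 = E33ᴴ * (U31 * Di) := by
    calc V31 = V31 * (D * Di) := by rw [hDDi, Matrix.mul_one]
      _ = (V31 * D) * Di := by rw [Matrix.mul_assoc]
      _ = (E33ᴴ * U31) * Di := by rw [← h1]
      _ = E33ᴴ * (U31 * Di) := by rw [Matrix.mul_assoc]
  have hsE : singval E33ᴴ 1 ≤ singval E33 1 := singval_conjTranspose_le E33
  have hsDi : singval Di 1 ≤ (σ k)⁻¹ := by
    apply singval_diagonal_le _ (by positivity)
    intro t
    rw [norm_inv, Complex.norm_real, Real.norm_eq_abs, abs_of_pos (hσt t).1]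
    exact inv_anti₀ hσk (hσt t).2
  have hε0 : 0 ≤ singval E33 1 := singval_nonneg E33 1
  have main : nrm.N V31 ≤ (singval E33 1 / σ k) * nrm.N U31 := by
    calc nrm.N V31 = nrm.N (E33ᴴ * (U31 * Di)) := by rw [← hV]
      _ ≤ singval E33ᴴ 1 * nrm.N (U31 * Di) := nrm.spec_mul _ _
      _ ≤ singval E33 1 * nrm.N (U31 * Di) :=
          mul_le_mul_of_nonneg_right hsE (nrm.nonneg _)
      _ ≤ singval E33 1 * (nrm.N U31 * singval Di 1) :=
          mul_le_mul_of_nonneg_left (nrm.mul_spec _ _) hε0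
      _ ≤ singval E33 1 * (nrm.N U31 * (σ k)⁻¹) :=
          mul_le_mul_of_nonneg_left (mul_le_mul_of_nonneg_left hsDi (nrm.nonneg _)) hε0
      _ = (singval E33 1 / σ k) * nrm.N U31 := by ring
  refine ⟨main, ?_⟩
  intro lk E31 E32 hU
  by_cases hε : singval E33 1 = 0
  · have h0 : nrm.N V31 ≤ 0 := by
      have := main
      rw [hε] at this
      simpa using this
    rw [hε]
    simpa using h0
  · have hεpos : 0 < singval E33 1 := lt_of_le_of_ne hε0 (Ne.symm hε)
    have hsq : singval E33 1 ^ 2 < σ k ^ 2 := by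
      apply pow_lt_pow_left₀ hE33 hε0
      norm_num
    have hden : 0 < σ k ^ 2 - singval E33 1 ^ 2 := by linarith
    calc nrm.N V31 ≤ (singval E33 1 / σ k) * nrm.N U31 := main
      _ ≤ (singval E33 1 / σ k) *
          (nrm.N (Matrix.fromCols E31 E32) / ((σ k ^ 2 - singval E33 1 ^ 2) / σ k)) :=
          mul_le_mul_of_nonneg_left hU (by positivity)
      _ = nrm.N (Matrix.fromCols E31 E32)
          / ((σ k ^ 2 - singval E33 1 ^ 2) / singval E33 1) := by
          field_simp
end
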